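/- Let n ≥ 3 and let a_1, ..., a_n be real numbers with 2a_k ≤ a_{k−1} + a_{k+1} for k = 2, ..., n−1, and 0 ≤ 2a_n ≤ a_{n−1}. Then for all x ∈ (0, π), ∑_{j=1}^n a_j sin(jx) − ∑_{j=1}^{n−2} a_{j+2} sin(jx) ≥ 0. -/

import Mathlib

open Real Finset

lemma trig1 (A s : ℝ) :
    Real.sin (A - s)^2 + Real.sin (A + s)^2 - 2 * Real.sin A ^ 2
      = 2 * Real.cos (2*A) * Real.sin s ^ 2 := by
  rw [Real.sin_add, Real.sin_sub, Real.cos_two_mul]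
  nlinarith [Real.sin_sq_add_cos_sq A, Real.sin_sq_add_cos_sq s]

lemma sumL (c : ℕ → ℝ) (x : ℝ) (m : ℕ) :
    Real.sin (x/2)^2 * (c 0 + 2 * ∑ k ∈ Finset.Icc 1 (m+1), c k * Real.cos (k * x))
    = ∑ k ∈ Finset.range m, (c k - 2*c (k+1) + c (k+2)) * Real.sin (((k:ℝ)+1) * (x/2))^2
      + (c m - 2 * c (m+1)) * Real.sin (((m:ℝ)+1) * (x/2))^2
      + c (m+1) * Real.sin (((m:ℝ)+2) * (x/2))^2 := by
  induction m with
  | zero =>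
      simp only [Nat.zero_add, Finset.range_zero, Finset.sum_empty, Finset.Icc_self,
        Finset.sum_singleton, Nat.cast_one, Nat.cast_zero]
      have hc : Real.cos (1 * x) = 2 * Real.cos (x/2)^2 - 1 := by
        have h := Real.cos_two_mul (x/2)
        rw [show 2*(x/2) = x by ring] at h
        rw [one_mul, h]
      have hs : Real.sin ((0:ℝ)+2 * (x/2)) = 2 * Real.sin (x/2) * Real.cos (x/2) := by
        rw [show (0:ℝ)+2*(x/2) = 2*(x/2) by ring, Real.sin_two_mul]
      rw [hc]
      rw [show ((0:ℝ)+2) * (x/2) = (0:ℝ)+2*(x/2) by ring, hs]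
      ring_nf
  | succ m ih =>
      have e3 : ∑ k ∈ Finset.Icc 1 (m+1+1), c k * Real.cos (k * x)
          = ∑ k ∈ Finset.Icc 1 (m+1), c k * Real.cos (k * x)
            + c (m+2) * Real.cos ((m+2 : ℕ) * x) := by
        rw [Finset.sum_Icc_succ_top (by omega : 1 ≤ (m+1)+1)]
      have e4 : ∑ k ∈ Finset.range (m+1), (c k - 2*c (k+1) + c (k+2)) * Real.sin (((k:ℝ)+1) * (x/2))^2
          = ∑ k ∈ Finset.range m, (c k - 2*c (k+1) + c (k+2)) * Real.sin (((k:ℝ)+1) * (x/2))^2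
            + (c m - 2*c (m+1) + c (m+2)) * Real.sin (((m:ℝ)+1) * (x/2))^2 := by
        rw [Finset.sum_range_succ]
      have key := trig1 (((m:ℝ)+2) * (x/2)) (x/2)
      rw [show ((m:ℝ)+2) * (x/2) - x/2 = ((m:ℝ)+1) * (x/2) by ring,
        show ((m:ℝ)+2) * (x/2) + x/2 = ((m:ℝ)+3) * (x/2) by ring,
        show 2 * (((m:ℝ)+2) * (x/2)) = ((m:ℝ)+2) * x by ring] at key
      rw [e3, e4]
      push_cast at ih ⊢
      have r1 : ((m:ℝ)+1+1) = (m:ℝ)+2 := by ring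
      have r2 : ((m:ℝ)+1+2) = (m:ℝ)+3 := by ring
      rw [r1, r2]
      linear_combination ih - c (m+2) * key

lemma sumM (a : ℕ → ℝ) (x : ℝ) (l : ℕ) :
    ∑ j ∈ Finset.Icc 1 (l+2), a j * Real.sin (j * x) -
      ∑ j ∈ Finset.Icc 1 l, a (j + 2) * Real.sin (j * x)
    = Real.sin x * (a 1 + 2 * ∑ k ∈ Finset.Icc 1 (l+1), a (k+1) * Real.cos (k * x)) := by
  induction l with
  | zero =>
      rw [show (0:ℕ)+2 = 1+1 by norm_num, Finset.sum_Icc_succ_top (by norm_num : (1:ℕ) ≤ 1+1)]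
      simp only [Finset.Icc_self, Finset.sum_singleton,
        Finset.Icc_eq_empty (by norm_num : ¬ (1:ℕ) ≤ 0), Finset.sum_empty]
      push_cast
      rw [Real.sin_two_mul]
      ring_nf
  | succ l ih =>
      have e1 : ∑ j ∈ Finset.Icc 1 (l+1+2), a j * Real.sin (j * x)
          = ∑ j ∈ Finset.Icc 1 (l+2), a j * Real.sin (j * x)
            + a (l+3) * Real.sin ((l+3 : ℕ) * x) := by
        rw [show l+1+2 = (l+2)+1 by omega, Finset.sum_Icc_succ_top (by omega : 1 ≤ (l+2)+1)]
      have e2 : ∑ j ∈ Finset.Icc 1 (l+1), a (j+2) * Real.sin (j * x)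
          = ∑ j ∈ Finset.Icc 1 l, a (j+2) * Real.sin (j * x)
            + a (l+3) * Real.sin ((l+1 : ℕ) * x) := by
        rw [Finset.sum_Icc_succ_top (by omega : 1 ≤ l+1)]
      have e3 : ∑ k ∈ Finset.Icc 1 (l+1+1), a (k+1) * Real.cos (k * x)
          = ∑ k ∈ Finset.Icc 1 (l+1), a (k+1) * Real.cos (k * x)
            + a (l+3) * Real.cos ((l+2 : ℕ) * x) := by
        rw [Finset.sum_Icc_succ_top (by omega : 1 ≤ (l+1)+1)]
      rw [e1, e2, e3]
      have key : Real.sin (((l:ℝ)+3)*x) - Real.sin (((l:ℝ)+1)*x)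
          = 2 * Real.sin x * Real.cos (((l:ℝ)+2)*x) := by
        rw [show ((l:ℝ)+3)*x = ((l:ℝ)+2)*x + x by ring,
          show ((l:ℝ)+1)*x = ((l:ℝ)+2)*x - x by ring, Real.sin_add, Real.sin_sub]
        ring
      push_cast at ih key ⊢
      linear_combination ih + a (l+3) * key

theorem stmt_4 (n : ℕ) (hn : 3 ≤ n) (a : ℕ → ℝ)
    (hconv : ∀ k, 2 ≤ k → k ≤ n - 1 → 2 * a k ≤ a (k - 1) + a (k + 1))
    (h1 : 0 ≤ 2 * a n) (h2 : 2 * a n ≤ a (n - 1)) :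
    ∀ x ∈ Set.Ioo 0 Real.pi,
      0 ≤ ∑ j ∈ Finset.Icc 1 n, a j * Real.sin (j * x) -
          ∑ j ∈ Finset.Icc 1 (n - 2), a (j + 2) * Real.sin (j * x) := by
  obtain ⟨l, rfl⟩ : ∃ l, n = l + 3 := ⟨n - 3, by omega⟩
  simp only [show l + 3 - 1 = l + 2 from by omega] at hconv h2
  rintro x ⟨hx0, hxpi⟩
  have hsx : 0 < Real.sin x := Real.sin_pos_of_pos_of_lt_pi hx0 hxpi
  have hs2 : 0 < Real.sin (x/2) :=
    Real.sin_pos_of_pos_of_lt_pi (by linarith) (by linarith [Real.pi_pos])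
  rw [show l + 3 - 2 = l + 1 from by omega]
  have hM := sumM a x (l+1)
  simp only [show l+1+2 = l+3 from by omega, show l+1+1 = l+2 from by omega] at hM
  rw [hM]
  have hL := sumL (fun k => a (k+1)) x (l+1)
  simp only [add_assoc, Nat.reduceAdd, Nat.zero_add] at hL
  have hpos : 0 ≤ Real.sin (x / 2) ^ 2 *
      (a 1 + 2 * ∑ k ∈ Finset.Icc 1 (l + 2), a (k + 1) * Real.cos (k * x)) := by
    rw [hL]
    apply add_nonneg
    · apply Finset.sum_nonneg
      intro k hk
      have hk' : k < l + 1 := Finset.mem_range.mp hk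
      have hc := hconv (k+2) (by omega) (by omega)
      simp only [show k+2-1 = k+1 from rfl] at hc
      exact mul_nonneg (by linarith) (sq_nonneg _)
    · exact add_nonneg (mul_nonneg (by linarith) (sq_nonneg _))
        (mul_nonneg (by linarith) (sq_nonneg _))
  have hg : 0 ≤ a 1 + 2 * ∑ k ∈ Finset.Icc 1 (l + 2), a (k + 1) * Real.cos (k * x) := by
    exact (mul_nonneg_iff_of_pos_left (pow_pos hs2 2)).mp hpos
  exact mul_nonneg hsx.le hg
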